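/- For Death-Birth updating with p̄₁ + 2p̄₂ = (1+1/κ)p(v₁|v₂) and μ = p̄₂/p̄₁, ν = p(v₁|v₂)/(κp̄₁), one has the identity (1+2μ)/(1+2(μ−ν)) = (κ+1)/(κ−1). Consequently, the condition for strategy 1 to be favored, (1+2μ)R + (1+2(μ−ν))S > (1+2(μ−ν))T + (1+2μ)P, is equivalent to Tarnita's condition σR + S > T + σP with σ = (κ+1)/(κ−1). -/

import Mathlib

/-- **Tarnita's σ for Death-Birth updating equals `(κ+1)/(κ−1)`.**
With `p̄₁, p̄₂, p(v₁|v₂) > 0` satisfying `2p̄₂ + p̄₁ = (1+1/κ)·p(v₁|v₂)` and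
`μ = p̄₂/p̄₁`, `ν = p(v₁|v₂)/(κ·p̄₁)`, one has `(1+2μ)/(1+2(μ−ν)) = (κ+1)/(κ−1)`;
consequently the condition `(1+2μ)R + (1+2(μ−ν))S > (1+2(μ−ν))T + (1+2μ)P` for strategy 1
to be favored is equivalent to Tarnita's condition `σR + S > T + σP` with
`σ = (κ+1)/(κ−1)`. -/
theorem tarnita_sigma_death_birth
    (κ p1 p2 pv : ℝ) (hκ : 1 < κ)
    (hp1 : 0 < p1) (hp2 : 0 < p2) (hpv : 0 < pv)
    (hid : 2 * p2 + p1 = (1 + 1 / κ) * pv)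
    (μ ν : ℝ) (hμ : μ = p2 / p1) (hν : ν = pv / (κ * p1)) :
    (1 + 2 * μ) / (1 + 2 * (μ - ν)) = (κ + 1) / (κ - 1) ∧
    (∀ R S T P : ℝ,
      ((1 + 2 * μ) * R + (1 + 2 * (μ - ν)) * S
          > (1 + 2 * (μ - ν)) * T + (1 + 2 * μ) * P ↔
        ((κ + 1) / (κ - 1)) * R + S > T + ((κ + 1) / (κ - 1)) * P)) := by
  have hκ0 : 0 < κ := lt_trans one_pos hκ
  have hκ1 : 0 < κ - 1 := by linarith
  have hc : 0 < pv / (κ * p1) := div_pos hpv (mul_pos hκ0 hp1)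
  have h1 : 1 + 2 * μ = (κ + 1) * (pv / (κ * p1)) := by
    subst hμ
    field_simp at hid ⊢
    linear_combination hid
  have h2 : 1 + 2 * (μ - ν) = (κ - 1) * (pv / (κ * p1)) := by
    subst hμ hν
    field_simp at hid ⊢
    linear_combination hid
  refine ⟨by rw [h1, h2, mul_div_mul_right _ _ hc.ne'], ?_⟩
  intro R S T P
  rw [h1, h2, gt_iff_lt, gt_iff_lt]
  have e1 : (κ - 1) * (pv / (κ * p1)) * T + (κ + 1) * (pv / (κ * p1)) * P <
      (κ + 1) * (pv / (κ * p1)) * R + (κ - 1) * (pv / (κ * p1)) * S ↔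
      (κ - 1) * T + (κ + 1) * P < (κ + 1) * R + (κ - 1) * S := by
    rw [show (κ - 1) * (pv / (κ * p1)) * T + (κ + 1) * (pv / (κ * p1)) * P
        = (pv / (κ * p1)) * ((κ - 1) * T + (κ + 1) * P) from by ring,
      show (κ + 1) * (pv / (κ * p1)) * R + (κ - 1) * (pv / (κ * p1)) * S
        = (pv / (κ * p1)) * ((κ + 1) * R + (κ - 1) * S) from by ring,
      mul_lt_mul_iff_right₀ hc]
  have e2 : T + (κ + 1) / (κ - 1) * P < (κ + 1) / (κ - 1) * R + S ↔
      (κ - 1) * T + (κ + 1) * P < (κ + 1) * R + (κ - 1) * S := by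
    rw [show (κ + 1) / (κ - 1) * R + S = ((κ + 1) * R + (κ - 1) * S) / (κ - 1) from by
        field_simp,
      show T + (κ + 1) / (κ - 1) * P = ((κ - 1) * T + (κ + 1) * P) / (κ - 1) from by
        field_simp,
      div_lt_div_iff₀ hκ1 hκ1]
    constructor <;> intro h <;> nlinarith
  rw [e1, e2]
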